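/- Assume (V0′), (F0), (F1) and (WN). Then for all u ∈ E, t ≥ 0 and w ∈ E^{ℱ−}: Φ(u) ≥ Φ(tu + w) + ½‖w‖₀² − ½∫_{ℝᴺ} V₁(x)w² dx + ((1−t²)/2)⟨Φ′(u), u⟩ − t⟨Φ′(u), w⟩. -/

import Mathlib

open MeasureTheory Filter Topology RealInnerProductSpace

section ptwise

variable {g : ℝ → ℝ}

private lemma cmp_le' (hg0 : g 0 = 0)
    (hWN : ∀ s₁ s₂ : ℝ, s₁ ≤ s₂ → (s₂ < 0 ∨ 0 < s₁) → g s₁ / |s₁| ≤ g s₂ / |s₂|)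
    {a r : ℝ} (h : (0 < a ∧ 0 ≤ r ∧ r ≤ a) ∨ (a < 0 ∧ r ≤ a)) :
    g r ≤ g a / a * r := by
  rcases h with ⟨ha, hr0, hra⟩ | ⟨ha, hra⟩
  · rcases eq_or_lt_of_le hr0 with h0 | h0
    · simp [← h0, hg0]
    · have h1 := hWN r a hra (Or.inr h0)
      rw [abs_of_pos h0, abs_of_pos ha] at h1
      have h2 : g r / r * r ≤ g a / a * r := mul_le_mul_of_nonneg_right h1 h0.le
      have h3 : g r / r * r = g r := by field_simp
      linarith
  · have hr : r < 0 := lt_of_le_of_lt hra ha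
    have h1 := hWN r a hra (Or.inl ha)
    rw [abs_of_neg hr, abs_of_neg ha] at h1
    have h2 : g r / (-r) * (-r) ≤ g a / (-a) * (-r) :=
      mul_le_mul_of_nonneg_right h1 (by linarith)
    have h3 : g r / (-r) * (-r) = g r := div_mul_cancel₀ _ (neg_ne_zero.mpr (ne_of_lt hr))
    have h4 : g a / (-a) * (-r) = g a / a * r := by ring
    linarith

private lemma cmp_ge' (hg0 : g 0 = 0)
    (hWN : ∀ s₁ s₂ : ℝ, s₁ ≤ s₂ → (s₂ < 0 ∨ 0 < s₁) → g s₁ / |s₁| ≤ g s₂ / |s₂|)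
    {a r : ℝ} (h : (0 < a ∧ a ≤ r) ∨ (a < 0 ∧ a ≤ r ∧ r ≤ 0)) :
    g a / a * r ≤ g r := by
  rcases h with ⟨ha, hra⟩ | ⟨ha, hra, hr0⟩
  · have hr : 0 < r := lt_of_lt_of_le ha hra
    have h1 := hWN a r hra (Or.inr ha)
    rw [abs_of_pos hr, abs_of_pos ha] at h1
    have h2 : g a / a * r ≤ g r / r * r := mul_le_mul_of_nonneg_right h1 hr.le
    have h3 : g r / r * r = g r := by field_simp
    linarith
  · rcases eq_or_lt_of_le hr0 with h0 | h0
    · simp [h0, hg0]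
    · have h1 := hWN a r hra (Or.inl h0)
      rw [abs_of_neg h0, abs_of_neg ha] at h1
      have h2 : g a / (-a) * (-r) ≤ g r / (-r) * (-r) :=
        mul_le_mul_of_nonneg_right h1 (by linarith)
      have h3 : g r / (-r) * (-r) = g r := div_mul_cancel₀ _ (neg_ne_zero.mpr (ne_of_lt h0))
      have h4 : g a / (-a) * (-r) = g a / a * r := by ring
      linarith

private lemma lemI (hgc : Continuous g) (hg0 : g 0 = 0)
    (hWN : ∀ s₁ s₂ : ℝ, s₁ ≤ s₂ → (s₂ < 0 ∨ 0 < s₁) → g s₁ / |s₁| ≤ g s₂ / |s₂|)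
    {a s : ℝ} (h : (0 < a ∧ 0 ≤ s) ∨ (a < 0 ∧ s ≤ 0)) :
    g a / (2 * a) * (s ^ 2 - a ^ 2) ≤ (∫ r in (0:ℝ)..s, g r) - ∫ r in (0:ℝ)..a, g r := by
  have ha : a ≠ 0 := by rcases h with ⟨h1, _⟩ | ⟨h1, _⟩ <;> [exact ne_of_gt h1; exact ne_of_lt h1]
  have hadj : (∫ r in (0:ℝ)..a, g r) + ∫ r in a..s, g r = ∫ r in (0:ℝ)..s, g r :=
    intervalIntegral.integral_add_adjacent_intervals (hgc.intervalIntegrable _ _)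
      (hgc.intervalIntegrable _ _)
  have hc : Continuous (fun r : ℝ => g a / a * r) := continuous_const.mul continuous_id
  have hlin : ∀ b c : ℝ, (∫ r in b..c, g a / a * r) = g a / a * ((c ^ 2 - b ^ 2) / 2) := by
    intro b c
    rw [intervalIntegral.integral_const_mul, integral_id]
  have hmono : (∫ r in a..s, g a / a * r) ≤ ∫ r in a..s, g r := by
    rcases h with ⟨ha', hs⟩ | ⟨ha', hs⟩
    · rcases le_total a s with hc' | hc'
      · exact intervalIntegral.integral_mono_on hc' (hc.intervalIntegrable _ _)
          (hgc.intervalIntegrable _ _)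
          (fun r hr => cmp_ge' hg0 hWN (Or.inl ⟨ha', hr.1⟩))
      · have h1 : (∫ r in s..a, g r) ≤ ∫ r in s..a, g a / a * r :=
          intervalIntegral.integral_mono_on hc' (hgc.intervalIntegrable _ _)
            (hc.intervalIntegrable _ _)
            (fun r hr => cmp_le' hg0 hWN (Or.inl ⟨ha', le_trans hs hr.1, hr.2⟩))
        rw [intervalIntegral.integral_symm s a, intervalIntegral.integral_symm s a]
        linarith
    · rcases le_total a s with hc' | hc'
      · exact intervalIntegral.integral_mono_on hc' (hc.intervalIntegrable _ _)
          (hgc.intervalIntegrable _ _)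
          (fun r hr => cmp_ge' hg0 hWN (Or.inr ⟨ha', hr.1, le_trans hr.2 hs⟩))
      · have h1 : (∫ r in s..a, g r) ≤ ∫ r in s..a, g a / a * r :=
          intervalIntegral.integral_mono_on hc' (hgc.intervalIntegrable _ _)
            (hc.intervalIntegrable _ _)
            (fun r hr => cmp_le' hg0 hWN (Or.inr ⟨ha', hr.2⟩))
        rw [intervalIntegral.integral_symm s a, intervalIntegral.integral_symm s a]
        linarith
  have heq : g a / a * ((s ^ 2 - a ^ 2) / 2) = g a / (2 * a) * (s ^ 2 - a ^ 2) := by ring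
  rw [hlin a s] at hmono
  linarith

private lemma lemIII (hgc : Continuous g) (hg0 : g 0 = 0)
    (hWN : ∀ s₁ s₂ : ℝ, s₁ ≤ s₂ → (s₂ < 0 ∨ 0 < s₁) → g s₁ / |s₁| ≤ g s₂ / |s₂|)
    (a : ℝ) : (∫ r in (0:ℝ)..a, g r) ≤ g a * a / 2 := by
  have hc : Continuous (fun r : ℝ => g a / a * r) := continuous_const.mul continuous_id
  rcases lt_trichotomy a 0 with ha | rfl | ha
  · have h1 : (∫ r in a..(0:ℝ), g a / a * r) ≤ ∫ r in a..(0:ℝ), g r :=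
      intervalIntegral.integral_mono_on ha.le (hc.intervalIntegrable _ _)
        (hgc.intervalIntegrable _ _)
        (fun r hr => cmp_ge' hg0 hWN (Or.inr ⟨ha, hr.1, hr.2⟩))
    have h2 : (∫ r in a..(0:ℝ), g a / a * r) = g a / a * ((0 ^ 2 - a ^ 2) / 2) := by
      rw [intervalIntegral.integral_const_mul, integral_id]
    have h3 : (∫ r in (0:ℝ)..a, g r) = -∫ r in a..(0:ℝ), g r :=
      intervalIntegral.integral_symm a 0
    have ha' : a ≠ 0 := ne_of_lt ha
    have h4 : g a / a * ((0 ^ 2 - a ^ 2) / 2) = -(g a * a / 2) := by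
      field_simp; ring
    linarith
  · simp
  · have h1 : (∫ r in (0:ℝ)..a, g r) ≤ ∫ r in (0:ℝ)..a, g a / a * r :=
      intervalIntegral.integral_mono_on ha.le (hgc.intervalIntegrable _ _)
        (hc.intervalIntegrable _ _)
        (fun r hr => cmp_le' hg0 hWN (Or.inl ⟨ha, hr.1, hr.2⟩))
    have h2 : (∫ r in (0:ℝ)..a, g a / a * r) = g a / a * ((a ^ 2 - 0 ^ 2) / 2) := by
      rw [intervalIntegral.integral_const_mul, integral_id]
    have h4 : g a / a * ((a ^ 2 - 0 ^ 2) / 2) = g a * a / 2 := by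
      field_simp; ring
    linarith

private lemma Fnonneg (hg0 : g 0 = 0)
    (hpos : ∀ s, 0 < s → 0 ≤ g s) (hneg : ∀ s, s < 0 → g s ≤ 0)
    (y : ℝ) : 0 ≤ ∫ r in (0:ℝ)..y, g r := by
  rcases le_total 0 y with h | h
  · refine intervalIntegral.integral_nonneg h (fun r hr => ?_)
    rcases eq_or_lt_of_le hr.1 with h0 | h0
    · simp [← h0, hg0]
    · exact hpos r h0
  · have h1 : (∫ r in y..(0:ℝ), g r) ≤ 0 := by
      have : (∫ r in y..(0:ℝ), -g r) ≥ 0 := by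
        refine intervalIntegral.integral_nonneg h (fun r hr => ?_)
        rcases eq_or_lt_of_le hr.2 with h0 | h0
        · simp [h0, hg0]
        · linarith [hneg r h0]
      rw [intervalIntegral.integral_neg] at this
      linarith
    rw [intervalIntegral.integral_symm y 0]
    linarith

private lemma ptwise_key (hgc : Continuous g) (hg0 : g 0 = 0)
    (hWN : ∀ s₁ s₂ : ℝ, s₁ ≤ s₂ → (s₂ < 0 ∨ 0 < s₁) → g s₁ / |s₁| ≤ g s₂ / |s₂|)
    (hpos : ∀ s, 0 < s → 0 ≤ g s) (hneg : ∀ s, s < 0 → g s ≤ 0)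
    (t a b : ℝ) (ht : 0 ≤ t) :
    (∫ r in (0:ℝ)..a, g r) + g a * ((t ^ 2 - 1) / 2 * a + t * b)
      ≤ ∫ r in (0:ℝ)..(t * a + b), g r := by
  rcases eq_or_ne a 0 with rfl | ha
  · simpa [hg0] using Fnonneg hg0 hpos hneg (t * 0 + b)
  have hca : 0 ≤ g a * a := by
    rcases lt_or_gt_of_ne ha with h | h
    · nlinarith [hneg a h]
    · exact mul_nonneg (hpos a h) h.le
  have hIII := lemIII hgc hg0 hWN a
  by_cases hsgn : (0 < a ∧ 0 ≤ t * a + b) ∨ (a < 0 ∧ t * a + b ≤ 0)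
  · have hI := lemI hgc hg0 hWN hsgn
    have hsq : 0 ≤ g a * a / 2 * (t - (t * a + b) / a) ^ 2 :=
      mul_nonneg (by linarith) (sq_nonneg _)
    have hdecomp : g a * ((t ^ 2 - 1) / 2 * a + t * b)
        = g a / (2 * a) * ((t * a + b) ^ 2 - a ^ 2)
          - g a * a / 2 * (t - (t * a + b) / a) ^ 2 := by
      field_simp
      ring
    linarith
  · have hsa : (t * a + b) / a < 0 := by
      rcases lt_or_gt_of_ne ha with h | h
      · have h2 : 0 < t * a + b := by
          by_contra h3; push_neg at h3; exact hsgn (Or.inr ⟨h, h3⟩)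
        exact div_neg_of_pos_of_neg h2 h
      · have h2 : t * a + b < 0 := by
          by_contra h3; push_neg at h3; exact hsgn (Or.inl ⟨h, h3⟩)
        exact div_neg_of_neg_of_pos h2 h
    have hts : ((t * a + b) / a) ^ 2 ≤ (t - (t * a + b) / a) ^ 2 := by nlinarith
    have hdecomp : g a * ((t ^ 2 - 1) / 2 * a + t * b)
        = g a / (2 * a) * ((t * a + b) ^ 2 - a ^ 2)
          - g a * a / 2 * (t - (t * a + b) / a) ^ 2 := by
      field_simp
      ring
    have hbound : g a * ((t ^ 2 - 1) / 2 * a + t * b) ≤ -(g a * a / 2) := by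
      have h5 : g a * a / 2 * ((t * a + b) / a) ^ 2 ≤ g a * a / 2 * (t - (t * a + b) / a) ^ 2 :=
        mul_le_mul_of_nonneg_left hts (by linarith)
      have h6 : g a / (2 * a) * ((t * a + b) ^ 2 - a ^ 2)
          - g a * a / 2 * (((t * a + b) / a)) ^ 2 = -(g a * a / 2) := by
        field_simp
        ring
      linarith
    linarith [Fnonneg hg0 hpos hneg (t * a + b)]

end ptwise
open MeasureTheory Filter Topology RealInnerProductSpace

/-- `Fint f x t = F(x,t) = ∫₀ᵗ f(x,s) ds`. -/
noncomputable def Fint {N : ℕ} (f : EuclideanSpace ℝ (Fin N) → ℝ → ℝ)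
    (x : EuclideanSpace ℝ (Fin N)) (t : ℝ) : ℝ :=
  ∫ s in (0:ℝ)..t, f x s

theorem key_energy_inequality
    {E : Type*} [NormedAddCommGroup E] [InnerProductSpace ℝ E] [CompleteSpace E]
    {N : ℕ} (hN : 3 ≤ N)
    -- `E = H¹(ℝᴺ)`, realized as a Hilbert space of functions on `ℝᴺ` via `ι`,
    -- with (weak) gradient `grad`
    (ι : E →ₗ[ℝ] (EuclideanSpace ℝ (Fin N) → ℝ)) (hι : Function.Injective ι)
    (grad : E →ₗ[ℝ] (EuclideanSpace ℝ (Fin N) → EuclideanSpace ℝ (Fin N)))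
    (hmem2 : ∀ u : E, MemLp (ι u) 2 (volume : Measure (EuclideanSpace ℝ (Fin N))))
    (hmemg : ∀ u : E, MemLp (fun x => ‖grad u x‖) 2 (volume : Measure (EuclideanSpace ℝ (Fin N))))
    -- the spectral decomposition of `E` into the negative and positive spectral
    -- subspaces of the Schrödinger operator, with the associated projections
    (Em Ep : Submodule ℝ E) (hEmc : IsClosed (Em : Set E)) (hEpc : IsClosed (Ep : Set E))
    (Pm Pp : E →L[ℝ] E)
    (hPm : ∀ u, Pm u ∈ Em) (hPp : ∀ u, Pp u ∈ Ep) (hPsum : ∀ u, Pm u + Pp u = u)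
    (hPmId : ∀ u ∈ Em, Pm u = u) (hPpId : ∀ u ∈ Ep, Pp u = u)
    (horth : ∀ v ∈ Em, ∀ w ∈ Ep, ⟪v, w⟫ = 0)
    -- (V0'): `V = V₀ + V₁`, `V₀` continuous and bounded, `V₁` continuous vanishing
    -- at infinity; the norm `‖·‖₀` of `E` is the form norm of `A₀ = -Δ + V₀`, whose
    -- quadratic form is positive on `Ep = E^{ℱ+}` and negative on `Em = E^{ℱ-}`
    (V₀ V₁ : EuclideanSpace ℝ (Fin N) → ℝ)
    (hV₀c : Continuous V₀) (hV₀b : ∃ M, ∀ x, |V₀ x| ≤ M) (hV₁c : Continuous V₁)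
    (hV₁0 : Tendsto V₁ (cocompact (EuclideanSpace ℝ (Fin N))) (𝓝 0))
    (hform : ∀ u : E,
      (∫ x, (‖grad u x‖ ^ 2 + V₀ x * (ι u x) ^ 2)) = ‖Pp u‖ ^ 2 - ‖Pm u‖ ^ 2)
    -- (F0) and (F1)
    (f : EuclideanSpace ℝ (Fin N) → ℝ → ℝ)
    (hfc : Continuous (Function.uncurry f))
    (p : ℝ) (hp1 : 2 < p) (hp2 : p < 2 * (N:ℝ) / ((N:ℝ) - 2))
    (hF0 : ∃ C₀ > 0, ∀ x t, |f x t| ≤ C₀ * (1 + |t| ^ (p - 1)))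
    (hF1 : ∀ ε > 0, ∃ δ > 0, ∀ x t, |t| ≤ δ → |f x t| ≤ ε * |t|)
    -- (WN): `t ↦ f(x,t)/|t|` is nondecreasing on `(-∞,0)` and on `(0,∞)`
    (hWN : ∀ (x : EuclideanSpace ℝ (Fin N)) (s₁ s₂ : ℝ),
      s₁ ≤ s₂ → (s₂ < 0 ∨ 0 < s₁) → f x s₁ / |s₁| ≤ f x s₂ / |s₂|)
    -- the energy functional `Φ` and its derivative `Φ'`
    (Φ : E → ℝ) (Φ' : E → E →L[ℝ] ℝ)
    (hΦ : ∀ u, Φ u = (1/2) * (∫ x, (‖grad u x‖ ^ 2 + (V₀ x + V₁ x) * (ι u x) ^ 2))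
        - ∫ x, Fint f x (ι u x))
    (hΦ'd : ∀ u, HasFDerivAt Φ (Φ' u) u)
    (hΦ'eq : ∀ u v, Φ' u v =
      (∫ x, (⟪grad u x, grad v x⟫ + (V₀ x + V₁ x) * (ι u x * ι v x)))
        - ∫ x, f x (ι u x) * ι v x)
    (hintF : ∀ u : E, Integrable (fun x => Fint f x (ι u x)))
    (hintV : ∀ u : E, Integrable (fun x => (V₀ x + V₁ x) * (ι u x) ^ 2))
    (hintf : ∀ u v : E, Integrable (fun x => f x (ι u x) * ι v x))
    (hintV₁ : ∀ u : E, Integrable (fun x => V₁ x * (ι u x) ^ 2))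
 :
    ∀ (u : E) (t : ℝ) (w : E), 0 ≤ t → w ∈ Em →
      Φ (t • u + w) + (1/2) * ‖w‖ ^ 2 - (1/2) * (∫ x, V₁ x * (ι w x) ^ 2)
        + (1 - t ^ 2) / 2 * Φ' u u - t * Φ' u w ≤ Φ u := by
  intro u t w ht hw
  -- continuity of `f x`
  have hfx : ∀ x, Continuous (f x) := fun x => hfc.comp (Continuous.prodMk_right x)
  -- `f x 0 = 0`
  have hzero : ∀ x, f x 0 = 0 := by
    intro x
    obtain ⟨δ, hδ, h⟩ := hF1 1 one_pos
    have := h x 0 (by simpa using hδ.le)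
    simpa using abs_eq_zero.mp (le_antisymm (by simpa using this) (abs_nonneg _))
  -- sign of `f`
  have hsign : ∀ x s, 0 < s → 0 ≤ f x s := by
    intro x s hs
    have key : ∀ ε : ℝ, 0 < ε → 0 ≤ f x s / s + ε := by
      intro ε hε
      obtain ⟨δ, hδ, hδ'⟩ := hF1 ε hε
      have hr0 : 0 < min δ s := lt_min hδ hs
      have h1 := hWN x (min δ s) s (min_le_right _ _) (Or.inr hr0)
      rw [abs_of_pos hr0, abs_of_pos hs] at h1
      have h2 := hδ' x (min δ s) (by rw [abs_of_pos hr0]; exact min_le_left _ _)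
      rw [abs_of_pos hr0] at h2
      have h3 : -(ε * min δ s) ≤ f x (min δ s) := (abs_le.mp h2).1
      have h4 : -ε ≤ f x (min δ s) / min δ s := by
        rw [le_div_iff₀ hr0]; nlinarith
      linarith
    have h0 : 0 ≤ f x s / s := le_of_forall_pos_le_add key
    have := mul_nonneg h0 hs.le
    rwa [div_mul_cancel₀ _ (ne_of_gt hs)] at this
  have hsign' : ∀ x s, s < 0 → f x s ≤ 0 := by
    intro x s hs
    have key : ∀ ε : ℝ, 0 < ε → f x s / (-s) ≤ 0 + ε := by
      intro ε hε
      obtain ⟨δ, hδ, hδ'⟩ := hF1 ε hε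
      set r := max (-δ) s with hr
      have hr0 : r < 0 := max_lt (by linarith) hs
      have h1 := hWN x s r (le_max_right _ _) (Or.inl hr0)
      rw [abs_of_neg hr0, abs_of_neg hs] at h1
      have h2 := hδ' x r (by rw [abs_of_neg hr0]; exact neg_le.mp (le_max_left _ _))
      rw [abs_of_neg hr0] at h2
      have h3 : f x r ≤ ε * (-r) := (abs_le.mp h2).2
      have h4 : f x r / (-r) ≤ ε := by
        rw [div_le_iff₀ (by linarith)]; nlinarith
      linarith
    have h0 : f x s / (-s) ≤ 0 := by
      have := le_of_forall_pos_le_add key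
      simpa using this
    have := mul_nonpos_of_nonpos_of_nonneg h0 (by linarith : (0:ℝ) ≤ -s)
    rwa [div_mul_cancel₀ _ (by linarith : (-s : ℝ) ≠ 0)] at this
  -- integrability of the quadratic-form integrands
  have hg2 : ∀ z : E, Integrable (fun x => ‖grad z x‖ ^ 2) := by
    intro z
    simpa using (hmemg z).integrable_sq
  have hQint : ∀ z : E, Integrable (fun x => ‖grad z x‖ ^ 2 + (V₀ x + V₁ x) * (ι z x) ^ 2) :=
    fun z => (hg2 z).add (hintV z)
  -- pointwise evaluation identities
  have hι2 : ∀ x, ι (t • u + w) x = t * ι u x + ι w x := by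
    intro x; simp [map_add, _root_.map_smul]
  have hgrad2 : ∀ x, grad (t • u + w) x = t • grad u x + grad w x := by
    intro x; simp [map_add, _root_.map_smul]
  have hιp : ∀ x, ι (u + w) x = ι u x + ι w x := by intro x; simp [map_add]
  have hιm : ∀ x, ι (u - w) x = ι u x - ι w x := by intro x; simp [map_sub]
  have hgradp : ∀ x, grad (u + w) x = grad u x + grad w x := by intro x; simp [map_add]
  have hgradm : ∀ x, grad (u - w) x = grad u x - grad w x := by intro x; simp [map_sub]
  -- A1 : expansion of the quadratic form at `t • u + w`
  have A1 : (∫ x, (‖grad (t • u + w) x‖ ^ 2 + (V₀ x + V₁ x) * (ι (t • u + w) x) ^ 2))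
      = t ^ 2 * (∫ x, (‖grad u x‖ ^ 2 + (V₀ x + V₁ x) * (ι u x) ^ 2))
        + ((t / 2) * (∫ x, (‖grad (u + w) x‖ ^ 2 + (V₀ x + V₁ x) * (ι (u + w) x) ^ 2))
          - (t / 2) * (∫ x, (‖grad (u - w) x‖ ^ 2 + (V₀ x + V₁ x) * (ι (u - w) x) ^ 2))
          + (∫ x, (‖grad w x‖ ^ 2 + (V₀ x + V₁ x) * (ι w x) ^ 2))) := by
    have hpt : (fun x => ‖grad (t • u + w) x‖ ^ 2 + (V₀ x + V₁ x) * (ι (t • u + w) x) ^ 2)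
        = fun x => t ^ 2 * (‖grad u x‖ ^ 2 + (V₀ x + V₁ x) * (ι u x) ^ 2)
          + ((t / 2) * (‖grad (u + w) x‖ ^ 2 + (V₀ x + V₁ x) * (ι (u + w) x) ^ 2)
            - (t / 2) * (‖grad (u - w) x‖ ^ 2 + (V₀ x + V₁ x) * (ι (u - w) x) ^ 2)
            + (‖grad w x‖ ^ 2 + (V₀ x + V₁ x) * (ι w x) ^ 2)) := by
      funext x
      rw [hι2 x, hgrad2 x, hιp x, hιm x, hgradp x, hgradm x]
      have n1 : ‖t • grad u x + grad w x‖ ^ 2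
          = t ^ 2 * ‖grad u x‖ ^ 2 + 2 * t * ⟪grad u x, grad w x⟫ + ‖grad w x‖ ^ 2 := by
        rw [norm_add_sq_real, norm_smul, real_inner_smul_left, mul_pow, Real.norm_eq_abs, sq_abs]
        ring
      have n2 := norm_add_sq_real (grad u x) (grad w x)
      have n3 := norm_sub_sq_real (grad u x) (grad w x)
      rw [n1, n2, n3]; ring
    have iu' : Integrable (fun x => t ^ 2 * (‖grad u x‖ ^ 2 + (V₀ x + V₁ x) * (ι u x) ^ 2)) :=
      (hQint u).const_mul _
    have ip' : Integrable (fun x => t / 2 * (‖grad (u + w) x‖ ^ 2 + (V₀ x + V₁ x) * (ι (u + w) x) ^ 2)) :=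
      (hQint (u + w)).const_mul _
    have im' : Integrable (fun x => t / 2 * (‖grad (u - w) x‖ ^ 2 + (V₀ x + V₁ x) * (ι (u - w) x) ^ 2)) :=
      (hQint (u - w)).const_mul _
    have i3 : Integrable (fun x => t / 2 * (‖grad (u + w) x‖ ^ 2 + (V₀ x + V₁ x) * (ι (u + w) x) ^ 2)
        - t / 2 * (‖grad (u - w) x‖ ^ 2 + (V₀ x + V₁ x) * (ι (u - w) x) ^ 2)) := by
      exact ip'.sub im'
    have i2 : Integrable (fun x => t / 2 * (‖grad (u + w) x‖ ^ 2 + (V₀ x + V₁ x) * (ι (u + w) x) ^ 2)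
        - t / 2 * (‖grad (u - w) x‖ ^ 2 + (V₀ x + V₁ x) * (ι (u - w) x) ^ 2)
        + (‖grad w x‖ ^ 2 + (V₀ x + V₁ x) * (ι w x) ^ 2)) := by
      exact i3.add (hQint w)
    rw [hpt, integral_add iu' i2, integral_add i3 (hQint w), integral_sub ip' im',
      integral_const_mul, integral_const_mul, integral_const_mul]
  -- A2 : polarization identity for the bilinear form
  have A2 : (∫ x, (⟪grad u x, grad w x⟫ + (V₀ x + V₁ x) * (ι u x * ι w x)))
      = (1 / 4) * (∫ x, (‖grad (u + w) x‖ ^ 2 + (V₀ x + V₁ x) * (ι (u + w) x) ^ 2))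
        - (1 / 4) * (∫ x, (‖grad (u - w) x‖ ^ 2 + (V₀ x + V₁ x) * (ι (u - w) x) ^ 2)) := by
    have hpt : (fun x => ⟪grad u x, grad w x⟫ + (V₀ x + V₁ x) * (ι u x * ι w x))
        = fun x => (1 / 4) * (‖grad (u + w) x‖ ^ 2 + (V₀ x + V₁ x) * (ι (u + w) x) ^ 2)
          - (1 / 4) * (‖grad (u - w) x‖ ^ 2 + (V₀ x + V₁ x) * (ι (u - w) x) ^ 2) := by
      funext x
      rw [hιp x, hιm x, hgradp x, hgradm x]
      have n2 := norm_add_sq_real (grad u x) (grad w x)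
      have n3 := norm_sub_sq_real (grad u x) (grad w x)
      rw [n2, n3]; ring
    have ip' : Integrable (fun x => 1 / 4 * (‖grad (u + w) x‖ ^ 2 + (V₀ x + V₁ x) * (ι (u + w) x) ^ 2)) :=
      (hQint (u + w)).const_mul _
    have im' : Integrable (fun x => 1 / 4 * (‖grad (u - w) x‖ ^ 2 + (V₀ x + V₁ x) * (ι (u - w) x) ^ 2)) :=
      (hQint (u - w)).const_mul _
    rw [hpt, integral_sub ip' im', integral_const_mul, integral_const_mul]
  -- A3 : the diagonal of the bilinear form is the quadratic form
  have A3 : (∫ x, (⟪grad u x, grad u x⟫ + (V₀ x + V₁ x) * (ι u x * ι u x)))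
      = ∫ x, (‖grad u x‖ ^ 2 + (V₀ x + V₁ x) * (ι u x) ^ 2) := by
    congr 1
    funext x
    rw [real_inner_self_eq_norm_sq]
    ring
  -- A4 : value of the quadratic form on `w ∈ Em`
  have hPpw : Pp w = 0 := by
    have h1 := hPsum w
    rw [hPmId w hw] at h1
    exact add_eq_left.mp h1
  have A4 : (∫ x, (‖grad w x‖ ^ 2 + (V₀ x + V₁ x) * (ι w x) ^ 2))
      = -‖w‖ ^ 2 + ∫ x, V₁ x * (ι w x) ^ 2 := by
    have i1 : Integrable (fun x => ‖grad w x‖ ^ 2 + V₀ x * (ι w x) ^ 2) := by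
      have : (fun x => ‖grad w x‖ ^ 2 + V₀ x * (ι w x) ^ 2)
          = fun x => (‖grad w x‖ ^ 2 + (V₀ x + V₁ x) * (ι w x) ^ 2) - V₁ x * (ι w x) ^ 2 := by
        funext x; ring
      rw [this]
      exact (hQint w).sub (hintV₁ w)
    have e : (∫ x, (‖grad w x‖ ^ 2 + (V₀ x + V₁ x) * (ι w x) ^ 2))
        = (∫ x, (‖grad w x‖ ^ 2 + V₀ x * (ι w x) ^ 2)) + ∫ x, V₁ x * (ι w x) ^ 2 := by
      rw [← integral_add i1 (hintV₁ w)]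
      congr 1
      funext x
      ring
    rw [e, hform w, hPpw, hPmId w hw]
    simp
  -- A5 : the nonlinear inequality, integrated
  have hptw : ∀ x, Fint f x (ι u x) + f x (ι u x) * ((t ^ 2 - 1) / 2 * ι u x + t * ι w x)
      ≤ Fint f x (ι (t • u + w) x) := by
    intro x
    rw [hι2 x]
    simp only [Fint]
    exact ptwise_key (hfx x) (hzero x) (hWN x) (hsign x) (hsign' x) t _ _ ht
  have h2eq : (fun x => f x (ι u x) * ((t ^ 2 - 1) / 2 * ι u x + t * ι w x))
      = fun x => (t ^ 2 - 1) / 2 * (f x (ι u x) * ι u x) + t * (f x (ι u x) * ι w x) := by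
    funext x; ring
  have h2int : Integrable (fun x => f x (ι u x) * ((t ^ 2 - 1) / 2 * ι u x + t * ι w x)) := by
    rw [h2eq]
    exact ((hintf u u).const_mul _).add ((hintf u w).const_mul _)
  have A5' : (∫ x, (Fint f x (ι u x) + f x (ι u x) * ((t ^ 2 - 1) / 2 * ι u x + t * ι w x)))
      ≤ ∫ x, Fint f x (ι (t • u + w) x) :=
    integral_mono ((hintF u).add h2int) (hintF (t • u + w)) hptw
  have A5 : (∫ x, Fint f x (ι u x))
      + ((t ^ 2 - 1) / 2 * (∫ x, f x (ι u x) * ι u x) + t * (∫ x, f x (ι u x) * ι w x))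
      ≤ ∫ x, Fint f x (ι (t • u + w) x) := by
    have hsplit : (∫ x, (Fint f x (ι u x) + f x (ι u x) * ((t ^ 2 - 1) / 2 * ι u x + t * ι w x)))
        = (∫ x, Fint f x (ι u x))
          + ((t ^ 2 - 1) / 2 * (∫ x, f x (ι u x) * ι u x)
            + t * (∫ x, f x (ι u x) * ι w x)) := by
      rw [integral_add (hintF u) h2int, h2eq,
        integral_add ((hintf u u).const_mul _) ((hintf u w).const_mul _),
        integral_const_mul, integral_const_mul]
    linarith [A5']
  -- final assembly
  have hfinal : Φ u - (Φ (t • u + w) + (1 / 2) * ‖w‖ ^ 2 - (1 / 2) * (∫ x, V₁ x * (ι w x) ^ 2)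
        + (1 - t ^ 2) / 2 * Φ' u u - t * Φ' u w)
      = (∫ x, Fint f x (ι (t • u + w) x))
        - ((∫ x, Fint f x (ι u x))
          + ((t ^ 2 - 1) / 2 * (∫ x, f x (ι u x) * ι u x)
            + t * (∫ x, f x (ι u x) * ι w x))) := by
    rw [hΦ u, hΦ (t • u + w), hΦ'eq u u, hΦ'eq u w, A3, A1, A2, A4]
    ring
  linarith [hfinal, A5]
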